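/- Let C₁ ≠ 0 and C₂ be real numbers and define c(x) = (C₁x + C₂)^(−3/2) on the set where C₁x + C₂ > 0. Then for every x with C₁x + C₂ > 0 one has 5·(c'(x))² − 3·c(x)·c''(x) = 0; consequently the second-order period coefficient Ω(x) = (5·c'(x)² − 3·c(x)·c''(x))/(48·c(x)³) vanishes identically on this set. -/

import Mathlib

lemma hasDerivAt_aff_rpow (C₁ C₂ : ℝ) (p : ℝ) {x : ℝ} (hx : C₁ * x + C₂ ≠ 0) :
    HasDerivAt (fun y : ℝ => (C₁ * y + C₂) ^ p)
      (p * (C₁ * x + C₂) ^ (p - 1) * C₁) x := by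
  have h1 : HasDerivAt (fun y : ℝ => C₁ * y + C₂) C₁ x := by
    simpa using ((hasDerivAt_id x).const_mul C₁).add_const C₂
  exact (Real.hasDerivAt_rpow_const (Or.inl hx)).comp x h1

lemma deriv_aff_rpow (C₁ C₂ : ℝ) (p : ℝ) {x : ℝ} (hx : C₁ * x + C₂ ≠ 0) :
    deriv (fun y : ℝ => (C₁ * y + C₂) ^ p) x
      = p * (C₁ * x + C₂) ^ (p - 1) * C₁ :=
  (hasDerivAt_aff_rpow C₁ C₂ p hx).deriv

lemma deriv2_aff_rpow (C₁ C₂ : ℝ) (p : ℝ) {x : ℝ} (hx : 0 < C₁ * x + C₂) :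
    deriv (deriv (fun y : ℝ => (C₁ * y + C₂) ^ p)) x
      = p * ((p - 1) * (C₁ * x + C₂) ^ (p - 1 - 1) * C₁) * C₁ := by
  have hopen : IsOpen {y : ℝ | 0 < C₁ * y + C₂} := by
    have : Continuous fun y : ℝ => C₁ * y + C₂ := by continuity
    exact isOpen_lt continuous_const this
  have hmem : {y : ℝ | 0 < C₁ * y + C₂} ∈ nhds x := hopen.mem_nhds hx
  have heq : deriv (fun y : ℝ => (C₁ * y + C₂) ^ p)
      =ᶠ[nhds x] fun y => p * (C₁ * y + C₂) ^ (p - 1) * C₁ := by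
    filter_upwards [hmem] with y hy
    exact deriv_aff_rpow C₁ C₂ p (ne_of_gt hy)
  rw [heq.deriv_eq]
  have h := ((hasDerivAt_aff_rpow C₁ C₂ (p - 1) (ne_of_gt hx)).const_mul p).mul_const C₁
  simpa [mul_assoc, mul_comm, mul_left_comm] using h.deriv

theorem special_profile_Omega_vanishes
    (C₁ C₂ : ℝ) (hC₁ : C₁ ≠ 0) :
    ∀ x : ℝ, 0 < C₁ * x + C₂ →
      5 * (deriv (fun y : ℝ => (C₁ * y + C₂) ^ (-(3:ℝ)/2)) x)^2
          - 3 * ((C₁ * x + C₂) ^ (-(3:ℝ)/2))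
            * deriv (deriv (fun y : ℝ => (C₁ * y + C₂) ^ (-(3:ℝ)/2))) x = 0 ∧
      (5 * (deriv (fun y : ℝ => (C₁ * y + C₂) ^ (-(3:ℝ)/2)) x)^2
          - 3 * ((C₁ * x + C₂) ^ (-(3:ℝ)/2))
            * deriv (deriv (fun y : ℝ => (C₁ * y + C₂) ^ (-(3:ℝ)/2))) x)
        / (48 * ((C₁ * x + C₂) ^ (-(3:ℝ)/2))^3) = 0 := by
  intro x hx
  set u := C₁ * x + C₂ with hu
  have hune : u ≠ 0 := ne_of_gt hx
  have h1 := deriv_aff_rpow C₁ C₂ (-(3:ℝ)/2) hune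
  have h2 := deriv2_aff_rpow C₁ C₂ (-(3:ℝ)/2) hx
  have key : 5 * (deriv (fun y : ℝ => (C₁ * y + C₂) ^ (-(3:ℝ)/2)) x)^2
      - 3 * (u ^ (-(3:ℝ)/2))
        * deriv (deriv (fun y : ℝ => (C₁ * y + C₂) ^ (-(3:ℝ)/2))) x = 0 := by
    rw [h1, h2]
    have e1 : ((C₁ * x + C₂) ^ ((-5:ℝ)/2))^2 = (C₁ * x + C₂) ^ (-(5:ℝ)) := by
      rw [← Real.rpow_natCast ((C₁ * x + C₂) ^ ((-5:ℝ)/2)) 2, ← Real.rpow_mul hx.le]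
      norm_num
      rfl
    have e2 : (C₁ * x + C₂) ^ ((-3:ℝ)/2) * (C₁ * x + C₂) ^ ((-7:ℝ)/2)
        = (C₁ * x + C₂) ^ (-(5:ℝ)) := by
      rw [← Real.rpow_add hx]; norm_num; rfl
    ring_nf
    ring_nf at e1 e2
    rw [e1, show C₁ ^ 2 * (C₁ * x + C₂) ^ (-3 / 2 : ℝ) * (C₁ * x + C₂) ^ (-7 / 2 : ℝ) = C₁ ^ 2 * ((C₁ * x + C₂) ^ (-3 / 2 : ℝ) * (C₁ * x + C₂) ^ (-7 / 2 : ℝ)) from by ring, e2]; ring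
  exact ⟨key, by rw [key]; simp⟩
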